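/- arXiv:2510.22158 — 2 statements merged into one kernel-verified Lean document; each statement's English description precedes it below -/
import Mathlib

section
/- Let μ be the exact flow μ^{π̄_k} induced by policy π̄_k and G the learned flow with d(μ, G) ≤ ε. Define the true exploitability e_true = J(BR(μ), μ) - J(π̄_k, μ) and tractable exploitability e = J(BR(G), G) - J(π̄_k, G), where BR(ν) denotes a best response to ν. If J is L-Lipschitz in the flow, then |e_true - e| ≤ 4L·ε. -/
/-- Closeness of true and tractable exploitability: if `d(μ, G) ≤ ε` and `J` is
L-Lipschitz in the flow, then `|e_true - e| ≤ 4L·ε` where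
`e_true = J(BR(μ), μ) - J(πbar, μ)` and `e = J(BR(G), G) - J(πbar, G)`. -/
theorem stmt_5 {Policy Flow : Type*} [MetricSpace Flow]
    (J : Policy → Flow → ℝ) (L : ℝ) (hL : 0 < L)
    (hLip : ∀ (π : Policy) (μ₁ μ₂ : Flow), |J π μ₁ - J π μ₂| ≤ L * dist μ₁ μ₂)
    (BR : Flow → Policy)
    (hBR : ∀ (ν : Flow) (π : Policy), J π ν ≤ J (BR ν) ν)
    (πbar : Policy) (μ G : Flow) (ε : ℝ) (hd : dist μ G ≤ ε) :
    |(J (BR μ) μ - J πbar μ) - (J (BR G) G - J πbar G)| ≤ 4 * L * ε := by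
  have hLd : L * dist μ G ≤ L * ε := by nlinarith [dist_nonneg (x := μ) (y := G)]
  have h1 := abs_le.mp (hLip (BR μ) μ G)
  have h2 := abs_le.mp (hLip (BR G) μ G)
  have h3 := abs_le.mp (hLip πbar μ G)
  have b1 := hBR μ (BR G)
  have b2 := hBR G (BR μ)
  rw [abs_le]
  constructor <;> nlinarith
end

section
/- A strictly monotone increasing rational-quadratic spline segment is invertible: let g(ξ) = α(ξ)/β(ξ) on [0,1] with α(ξ) = s·y₁·ξ² + (y₀δ₁ + y₁δ₀)ξ(1-ξ) + s·y₀(1-ξ)², β(ξ) = s·ξ² + (δ₀+δ₁)ξ(1-ξ) + s(1-ξ)², where s = y₁ - y₀ > 0 and δ₀, δ₁ > 0. Then β(ξ) > 0 on [0,1], g(0) = y₀, g(1) = y₁, and g is strictly increasing on [0,1]. -/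
/-- A strictly monotone increasing rational-quadratic spline segment is invertible:
with `s = y₁ - y₀ > 0` and `δ₀, δ₁ > 0`, the denominator `β` is positive on `[0,1]`,
`g(0) = y₀`, `g(1) = y₁`, and `g` is strictly increasing on `[0,1]`. -/
theorem stmt_13 (y₀ y₁ δ₀ δ₁ s : ℝ) (hy : y₀ < y₁) (hδ₀ : 0 < δ₀) (hδ₁ : 0 < δ₁)
    (hs : s = y₁ - y₀) (α β g : ℝ → ℝ)
    (hα : ∀ ξ, α ξ = s * y₁ * ξ ^ 2 + (y₀ * δ₁ + y₁ * δ₀) * ξ * (1 - ξ) + s * y₀ * (1 - ξ) ^ 2)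
    (hβ : ∀ ξ, β ξ = s * ξ ^ 2 + (δ₀ + δ₁) * ξ * (1 - ξ) + s * (1 - ξ) ^ 2)
    (hg : ∀ ξ, g ξ = α ξ / β ξ) :
    (∀ ξ ∈ Set.Icc (0 : ℝ) 1, 0 < β ξ) ∧ g 0 = y₀ ∧ g 1 = y₁ ∧
      StrictMonoOn g (Set.Icc (0 : ℝ) 1) := by
  have hs0 : 0 < s := by rw [hs]; linarith
  have hbpos : ∀ ξ ∈ Set.Icc (0 : ℝ) 1, 0 < β ξ := by
    intro ξ hξ
    obtain ⟨h0, h1⟩ := hξ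
    rw [hβ]
    nlinarith [sq_nonneg ξ, sq_nonneg (1 - ξ), sq_nonneg (2 * ξ - 1),
      mul_nonneg (mul_nonneg (le_of_lt (by linarith : (0:ℝ) < δ₀ + δ₁)) h0) (by linarith : (0:ℝ) ≤ 1 - ξ)]
  have hg0 : g 0 = y₀ := by
    rw [hg, hα, hβ]
    have : s * (0:ℝ) ^ 2 + (δ₀ + δ₁) * 0 * (1 - 0) + s * (1 - 0) ^ 2 = s := by ring
    rw [show s * y₁ * (0:ℝ) ^ 2 + (y₀ * δ₁ + y₁ * δ₀) * 0 * (1 - 0) + s * y₀ * (1 - 0) ^ 2 = s * y₀ by ring, this]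
    field_simp
  have hg1 : g 1 = y₁ := by
    rw [hg, hα, hβ]
    rw [show s * y₁ * (1:ℝ) ^ 2 + (y₀ * δ₁ + y₁ * δ₀) * 1 * (1 - 1) + s * y₀ * (1 - 1) ^ 2 = s * y₁ by ring,
      show s * (1:ℝ) ^ 2 + (δ₀ + δ₁) * 1 * (1 - 1) + s * (1 - 1) ^ 2 = s by ring]
    field_simp
  refine ⟨hbpos, hg0, hg1, ?_⟩
  intro a ha b hb hab
  have hba : 0 < β a := hbpos a ha
  have hbb : 0 < β b := hbpos b hb
  rw [hg, hg, div_lt_div_iff₀ hba hbb]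
  have key : α b * β a - α a * β b =
      (b - a) * s ^ 2 * (δ₁ * (a * b) + δ₀ * ((1 - a) * (1 - b)) +
        s * (a * (1 - b) + b * (1 - a))) := by
    rw [hα a, hα b, hβ a, hβ b, hs]; ring
  obtain ⟨ha0, ha1⟩ := ha
  obtain ⟨hb0, hb1⟩ := hb
  have hpos : 0 < δ₁ * (a * b) + δ₀ * ((1 - a) * (1 - b)) + s * (a * (1 - b) + b * (1 - a)) := by
    have h1 : 0 ≤ δ₁ * (a * b) := mul_nonneg hδ₁.le (mul_nonneg ha0 hb0)
    have h2 : 0 ≤ δ₀ * ((1 - a) * (1 - b)) :=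
      mul_nonneg hδ₀.le (mul_nonneg (by linarith) (by linarith))
    have h3 : 0 < s * (b * (1 - a)) :=
      mul_pos hs0 (mul_pos (by linarith) (by linarith))
    nlinarith [mul_nonneg hs0.le (mul_nonneg ha0 (by linarith : (0:ℝ) ≤ 1 - b))]
  nlinarith [mul_pos (mul_pos (by linarith : (0:ℝ) < b - a) (by positivity : (0:ℝ) < s ^ 2)) hpos]
end
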